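/- Let R be a local ring and let M be an R-module generated by n elements. If M surjects onto a direct sum ⊕_{i=1}^{m} N_i of nonzero R-modules, then m ≤ n. -/

import Mathlib

open DirectSum

namespace NCLocal

variable {R : Type*} [Ring R] [IsLocalRing R]

theorem isUnit_of_mul_one_left {u x : R} (h : u * x = 1) : IsUnit x := by
  have h1 : x * u + (1 - x * u) = 1 := by noncomm_ring
  rcases IsLocalRing.isUnit_or_isUnit_of_add_one h1 with hxu | h2
  · obtain ⟨v, hv⟩ := hxu.exists_right_inv
    have hxv : x * (u * v) = 1 := by rw [← mul_assoc]; exact hv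
    have huv : u * v = u := by
      calc u * v = (u * x) * (u * v) := by rw [h, one_mul]
        _ = u * (x * (u * v)) := by rw [mul_assoc]
        _ = u := by rw [hxv, mul_one]
    refine ⟨⟨x, u, ?_, h⟩, rfl⟩
    rw [← huv] at h ⊢
    exact hxv
  · obtain ⟨w, hw⟩ := h2.exists_left_inv
    have h0 : (1 - x * u) * x = 0 := by
      have : (1 - x * u) * x = x - x * (u * x) := by noncomm_ring
      rw [this, h, mul_one, sub_self]
    have hx0 : x = 0 := by
      calc x = (w * (1 - x * u)) * x := by rw [hw, one_mul]
        _ = w * ((1 - x * u) * x) := by rw [mul_assoc]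
        _ = 0 := by rw [h0, mul_zero]
    exact absurd (by rw [hx0, mul_zero] at h; exact h.symm) one_ne_zero

theorem isUnit_of_mul_one_right {x u : R} (h : x * u = 1) : IsUnit x := by
  have h1 : u * x + (1 - u * x) = 1 := by noncomm_ring
  rcases IsLocalRing.isUnit_or_isUnit_of_add_one h1 with hux | h2
  · obtain ⟨v, hv⟩ := hux.exists_left_inv
    exact isUnit_of_mul_one_left (u := v * u) (by rw [mul_assoc]; exact hv)
  · obtain ⟨w, hw⟩ := h2.exists_right_inv
    have h0 : x * (1 - u * x) = 0 := by
      have : x * (1 - u * x) = x - (x * u) * x := by noncomm_ring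
      rw [this, h, one_mul, sub_self]
    have hx0 : x = 0 := by
      calc x = x * ((1 - u * x) * w) := by rw [hw, mul_one]
        _ = (x * (1 - u * x)) * w := by rw [mul_assoc]
        _ = 0 := by rw [h0, zero_mul]
    exact absurd (by rw [hx0, zero_mul] at h; exact h.symm) one_ne_zero

theorem nonunit_mul_left {x : R} (r : R) (hx : ¬ IsUnit x) : ¬ IsUnit (r * x) := fun h => by
  obtain ⟨v, hv⟩ := h.exists_left_inv
  exact hx (isUnit_of_mul_one_left (u := v * r) (by rw [mul_assoc]; exact hv))

theorem nonunit_mul_right {x : R} (r : R) (hx : ¬ IsUnit x) : ¬ IsUnit (x * r) := fun h => by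
  obtain ⟨v, hv⟩ := h.exists_right_inv
  exact hx (isUnit_of_mul_one_right (u := r * v) (by rw [← mul_assoc]; exact hv))

theorem nonunit_add {x y : R} (hx : ¬ IsUnit x) (hy : ¬ IsUnit y) : ¬ IsUnit (x + y) := fun h => by
  obtain ⟨u, hu⟩ := h.exists_left_inv
  rw [mul_add] at hu
  rcases IsLocalRing.isUnit_or_isUnit_of_add_one hu with h' | h'
  · obtain ⟨v, hv⟩ := h'.exists_left_inv
    exact hx (isUnit_of_mul_one_left (u := v * u) (by rw [mul_assoc]; exact hv))
  · obtain ⟨v, hv⟩ := h'.exists_left_inv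
    exact hy (isUnit_of_mul_one_left (u := v * u) (by rw [mul_assoc]; exact hv))

variable (R)

/-- The congruence relation on a noncommutative local ring whose quotient is the
residue division ring. -/
def locCon : RingCon R where
  r a b := ¬ IsUnit (a - b)
  iseqv := by
    refine ⟨fun x => by simp, fun {x y} h => fun h' => h ?_, fun {x y z} h1 h2 => ?_⟩
    · have := h'.neg
      rwa [neg_sub] at this
    · have := nonunit_add h1 h2
      rwa [sub_add_sub_cancel] at this
  add' := by
    intro w x y z h1 h2
    show ¬ IsUnit (w + y - (x + z))
    rw [add_sub_add_comm]
    exact nonunit_add h1 h2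
  mul' := by
    intro w x y z h1 h2
    show ¬ IsUnit (w * y - x * z)
    have key : w * y - x * z = w * (y - z) + (w - x) * z := by noncomm_ring
    rw [key]
    exact nonunit_add (nonunit_mul_left w h2) (nonunit_mul_right z h1)

/-- The residue division ring of a noncommutative local ring. -/
def Res := (locCon R).Quotient

instance : Ring (Res R) := inferInstanceAs (Ring (locCon R).Quotient)

instance : Nontrivial (Res R) := by
  refine ⟨((1 : R) : (locCon R).Quotient), ((0 : R) : (locCon R).Quotient), fun h => ?_⟩
  replace h : ((1 : R) : (locCon R).Quotient) = ((0 : R) : (locCon R).Quotient) := h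
  rw [RingCon.eq] at h
  exact h (by simpa using isUnit_one)

noncomputable instance : DivisionRing (Res R) := by
  refine DivisionRing.ofIsUnitOrEqZero fun a => ?_
  obtain ⟨x, rfl⟩ := Quotient.exists_rep (a : (locCon R).Quotient)
  by_cases hx : IsUnit x
  · exact Or.inl (hx.map (locCon R).mk')
  · refine Or.inr ?_
    show ((x : R) : (locCon R).Quotient) = ((0 : R) : (locCon R).Quotient)
    rw [RingCon.eq]
    show ¬ IsUnit (x - 0)
    simpa using hx


/-- The quotient ring homomorphism onto the residue division ring. -/
def resMk : R →+* Res R := (locCon R).mk'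

theorem resMk_surjective : Function.Surjective (resMk R) := by
  intro a
  obtain ⟨x, hx⟩ := Quotient.exists_rep (a : (locCon R).Quotient)
  exact ⟨x, hx⟩

theorem resMk_eq_zero_iff (x : R) : resMk R x = 0 ↔ ¬ IsUnit x := by
  constructor
  · intro h
    have h' : ((x : R) : (locCon R).Quotient) = ((0 : R) : (locCon R).Quotient) := h
    rw [RingCon.eq] at h'
    have h'' : ¬ IsUnit (x - 0) := h'
    simpa using h''
  · intro h
    show ((x : R) : (locCon R).Quotient) = ((0 : R) : (locCon R).Quotient)
    rw [RingCon.eq]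
    show ¬ IsUnit (x - 0)
    simpa using h

noncomputable instance : Module R (Res R) := Module.compHom _ (resMk R)

theorem res_smul_def (r : R) (d : Res R) : r • d = resMk R r * d := rfl

instance : IsScalarTower R (Res R) (Res R) :=
  ⟨fun r d e => mul_assoc (resMk R r) d e⟩

/-- The quotient map as an `R`-linear map. -/
noncomputable def resLinear : R →ₗ[R] Res R where
  toFun := resMk R
  map_add' := map_add _
  map_smul' r x := map_mul (resMk R) r x

theorem resLinear_surjective : Function.Surjective (resLinear R) := resMk_surjective R

theorem ker_resLinear : LinearMap.ker (resLinear R) = {x : R | ¬ IsUnit x} := by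
  ext x
  exact resMk_eq_zero_iff R x

theorem mem_ker_resLinear_iff (x : R) : x ∈ LinearMap.ker (resLinear R) ↔ ¬ IsUnit x :=
  resMk_eq_zero_iff R x

theorem ker_resLinear_ne_top : LinearMap.ker (resLinear R) ≠ ⊤ := by
  intro h
  have : (1 : R) ∈ LinearMap.ker (resLinear R) := h ▸ Submodule.mem_top
  exact (mem_ker_resLinear_iff R 1).mp this isUnit_one

/-- Every nontrivial finitely generated module over a noncommutative local ring
surjects onto the residue division ring. -/
theorem exists_surjective_to_res (P : Type*) [AddCommGroup P] [Module R P] [Nontrivial P]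
    (hfg : (⊤ : Submodule R P).FG) : ∃ g : P →ₗ[R] Res R, Function.Surjective g := by
  have hco : IsCoatomic (Submodule R P) :=
    CompleteLattice.coatomic_of_top_compact ((Submodule.fg_iff_compact _).mp hfg)
  rcases hco.eq_top_or_exists_le_coatom ⊥ with h | ⟨W, hW, -⟩
  · exact absurd h.symm top_ne_bot
  haveI hsimple : IsSimpleModule R (P ⧸ W) := isSimpleModule_iff_isCoatom.mpr hW
  haveI : Nontrivial (P ⧸ W) := IsSimpleModule.nontrivial R (P ⧸ W)
  obtain ⟨s₀, hs₀⟩ := exists_ne (0 : P ⧸ W)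
  set ψ := LinearMap.toSpanSingleton R (P ⧸ W) s₀ with hψdef
  have hψ : Function.Surjective ψ := IsSimpleModule.toSpanSingleton_surjective R hs₀
  have hker_le : LinearMap.ker ψ ≤ LinearMap.ker (resLinear R) := by
    intro a ha
    rw [LinearMap.mem_ker] at ha
    rw [mem_ker_resLinear_iff]
    intro hu
    have ha' : a • s₀ = 0 := by
      rw [← LinearMap.toSpanSingleton_apply R (P ⧸ W) s₀ a]
      exact ha
    apply hs₀
    calc s₀ = ((↑hu.unit⁻¹ : R) * a) • s₀ := by
          rw [IsUnit.val_inv_mul, one_smul]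
      _ = (↑hu.unit⁻¹ : R) • (a • s₀) := by rw [mul_smul]
      _ = 0 := by rw [ha', smul_zero]
  have hker_coatom : IsCoatom (LinearMap.ker ψ) :=
    LinearMap.isCoatom_ker_of_surjective hψ
  have hker_eq : LinearMap.ker ψ = LinearMap.ker (resLinear R) := by
    rcases hker_le.lt_or_eq with hlt | heq
    · exact absurd (hker_coatom.2 _ hlt) (ker_resLinear_ne_top R)
    · exact heq
  let e1 := ψ.quotKerEquivOfSurjective hψ
  let e2 := (resLinear R).quotKerEquivOfSurjective (resLinear_surjective R)
  let e0 := Submodule.quotEquivOfEq _ _ hker_eq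
  refine ⟨(e2.toLinearMap ∘ₗ e0.toLinearMap ∘ₗ e1.symm.toLinearMap) ∘ₗ W.mkQ, ?_⟩
  simp only [LinearMap.coe_comp, LinearEquiv.coe_coe]
  exact e2.surjective.comp (e0.surjective.comp (e1.symm.surjective.comp
    (Submodule.mkQ_surjective W)))

/-- If `(Res R)^m` is spanned over `R` by a finite set `t`, then `m ≤ t.card`. -/
theorem card_le_of_span_eq_top {m : ℕ} (t : Finset (Fin m → Res R))
    (ht : Submodule.span R (t : Set (Fin m → Res R)) = ⊤) : m ≤ t.card := by
  classical
  have hDspan : Submodule.span (Res R) (t : Set (Fin m → Res R)) = ⊤ := by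
    rw [← Submodule.restrictScalars_eq_top_iff (S := R)]
    refine top_unique ?_
    rw [← ht]
    exact Submodule.span_le.mpr fun x hx => Submodule.subset_span hx
  have h1 : (t : Set (Fin m → Res R)).finrank (Res R) ≤ t.card :=
    finrank_span_finset_le_card t
  rw [Set.finrank, hDspan, finrank_top] at h1
  calc m = Module.finrank (Res R) (Fin m → Res R) := by
        rw [Module.finrank_pi (Res R)]; simp
    _ ≤ t.card := h1

end NCLocal

open NCLocal in
/-- Let `R` be a (possibly noncommutative) local ring and `M` an
`R`-module generated by `n` elements. If `M` surjects onto a direct sum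
`⊕_{i=1}^{m} N_i` of nonzero `R`-modules, then `m ≤ n`. -/
theorem le_of_surjective_onto_directSum {R : Type*} [Ring R] [IsLocalRing R]
    {M : Type*} [AddCommGroup M] [Module R M] {n : ℕ} (s : Finset M)
    (hs : s.card = n) (hspan : Submodule.span R (s : Set M) = ⊤)
    {m : ℕ} (N : Fin m → Type*) [∀ i, AddCommGroup (N i)] [∀ i, Module R (N i)]
    (hN : ∀ i, Nontrivial (N i))
    (f : M →ₗ[R] ⨁ i, N i) (hf : Function.Surjective f) :
    m ≤ n := by
  classical
  have hMfg : (⊤ : Submodule R M).FG := ⟨s, hspan⟩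
  let e := DirectSum.linearEquivFunOnFintype R (Fin m) N
  have hproj : ∀ i, Function.Surjective
      ((LinearMap.proj i : (∀ j, N j) →ₗ[R] N i) ∘ₗ e.toLinearMap ∘ₗ f) := by
    intro i y
    obtain ⟨x, hx⟩ := hf (e.symm (Pi.single i y))
    refine ⟨x, ?_⟩
    have h1 : ((LinearMap.proj i : (∀ j, N j) →ₗ[R] N i) ∘ₗ e.toLinearMap ∘ₗ f) x
        = (e (f x)) i := rfl
    rw [h1, hx, e.apply_symm_apply]
    simp
  have hNfg : ∀ i, (⊤ : Submodule R (N i)).FG := by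
    intro i
    have h2 := hMfg.map ((LinearMap.proj i : (∀ j, N j) →ₗ[R] N i) ∘ₗ e.toLinearMap ∘ₗ f)
    rwa [Submodule.map_top, LinearMap.range_eq_top.mpr (hproj i)] at h2
  have hg : ∀ i, ∃ g : N i →ₗ[R] Res R, Function.Surjective g := fun i => by
    haveI := hN i
    exact exists_surjective_to_res R (N i) (hNfg i)
  choose g hgsurj using hg
  let G : M →ₗ[R] (Fin m → Res R) :=
    (LinearMap.pi fun i => (g i) ∘ₗ (LinearMap.proj i : (∀ j, N j) →ₗ[R] N i)) ∘ₗ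
      (e.toLinearMap ∘ₗ f)
  have hG : Function.Surjective G := by
    intro v
    choose y hy using fun i => hgsurj i (v i)
    obtain ⟨x, hx⟩ := hf (e.symm y)
    refine ⟨x, ?_⟩
    funext i
    have h1 : G x i = g i ((e (f x)) i) := rfl
    rw [h1, hx, e.apply_symm_apply]
    exact hy i
  have htspan : Submodule.span R ((s.image G : Finset _) : Set (Fin m → Res R)) = ⊤ := by
    rw [Finset.coe_image, Submodule.span_image, hspan, Submodule.map_top,
      LinearMap.range_eq_top]
    exact hG
  have hm := card_le_of_span_eq_top R (s.image G) htspan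
  exact hm.trans (le_trans Finset.card_image_le hs.le)
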